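/- Let {q_n} ⊂ (0,1), {m_n} ⊂ [1,∞), {r_n} ⊂ ℕ with q_n → 0, r_n → ∞, r_n/(q_n m_n) → ∞, r_n/m_n → 0, and such that lim q_n m_n exists in [0,∞]. Then log P(Bin(⌊m_n⌋, q_n) ≥ r_n) = r_n log(m_n q_n / r_n)(1 + o(1)) as n → ∞. -/

import Mathlib

open Filter

/-- The probability that a `Bin(m,p)` random variable equals `i`. -/
noncomputable def binomialP (m : ℕ) (p : ℝ) (i : ℕ) : ℝ :=
  (m.choose i : ℝ) * p ^ i * (1 - p) ^ (m - i)

/-- `P(Bin(m,p) ≥ k)`. -/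
noncomputable def binomTail (m : ℕ) (p : ℝ) (k : ℕ) : ℝ :=
  ∑ i ∈ Finset.Icc k m, binomialP m p i

lemma binomialP_nonneg {M i : ℕ} {q : ℝ} (h0 : 0 ≤ q) (h1 : q ≤ 1) :
    0 ≤ binomialP M q i := by
  unfold binomialP
  have : (0:ℝ) ≤ 1 - q := by linarith
  positivity

lemma binomTail_lower {M R : ℕ} {q : ℝ} (h0 : 0 ≤ q) (h1 : q ≤ 1) (hRM : R ≤ M) :
    binomialP M q R ≤ binomTail M q R := by
  unfold binomTail
  exact Finset.single_le_sum (f := fun i => binomialP M q i)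
    (fun i _ => binomialP_nonneg h0 h1) (by simp [Finset.mem_Icc, hRM])

lemma binomTail_upper {M R : ℕ} {q : ℝ} (h0 : 0 ≤ q) (h1 : q ≤ 1) (hRM : R ≤ M) :
    binomTail M q R ≤ (M.choose R : ℝ) * q ^ R := by
  have h1q : (0:ℝ) ≤ 1 - q := by linarith
  have key : ∀ i ∈ Finset.Icc R M, binomialP M q i ≤
      (M.choose R : ℝ) * q ^ R *
        (((M - R).choose (i - R) : ℝ) * q ^ (i - R) * (1 - q) ^ ((M - R) - (i - R))) := by
    intro i hi
    rw [Finset.mem_Icc] at hi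
    obtain ⟨hRi, hiM⟩ := hi
    have hchoose : (M.choose i : ℝ) ≤ (M.choose R : ℝ) * ((M - R).choose (i - R) : ℝ) := by
      have h1 : M.choose i * 1 ≤ M.choose i * i.choose R :=
        Nat.mul_le_mul_left _ (Nat.choose_pos hRi)
      have h2 := Nat.choose_mul (n := M) hRi
      have : M.choose i ≤ M.choose R * (M - R).choose (i - R) := by
        omega
      exact_mod_cast this
    have hq' : q ^ i = q ^ R * q ^ (i - R) := by
      rw [← pow_add]; congr 1; omega
    have hMi : M - i = (M - R) - (i - R) := by omega
    unfold binomialP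
    rw [hq', hMi]
    have hqp : (0:ℝ) ≤ q ^ R * q ^ (i - R) := by positivity
    calc (M.choose i : ℝ) * (q ^ R * q ^ (i - R)) * (1 - q) ^ ((M - R) - (i - R))
        ≤ ((M.choose R : ℝ) * ((M - R).choose (i - R) : ℝ)) * (q ^ R * q ^ (i - R)) *
            (1 - q) ^ ((M - R) - (i - R)) := by
          apply mul_le_mul_of_nonneg_right (mul_le_mul_of_nonneg_right hchoose hqp)
          positivity
      _ = (M.choose R : ℝ) * q ^ R *
            (((M - R).choose (i - R) : ℝ) * q ^ (i - R) * (1 - q) ^ ((M - R) - (i - R))) := by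
          ring
  have hsum : ∑ j ∈ Finset.range (M - R + 1),
      (((M - R).choose j : ℝ) * q ^ j * (1 - q) ^ ((M - R) - j)) = 1 := by
    calc ∑ j ∈ Finset.range (M - R + 1),
          (((M - R).choose j : ℝ) * q ^ j * (1 - q) ^ ((M - R) - j))
        = ∑ j ∈ Finset.range (M - R + 1),
            q ^ j * (1 - q) ^ ((M - R) - j) * ((M - R).choose j : ℝ) := by
          apply Finset.sum_congr rfl; intro j _; ring
      _ = (q + (1 - q)) ^ (M - R) := (add_pow q (1 - q) (M - R)).symm
      _ = 1 := by norm_num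
  calc binomTail M q R ≤ ∑ i ∈ Finset.Icc R M,
        (M.choose R : ℝ) * q ^ R *
          (((M - R).choose (i - R) : ℝ) * q ^ (i - R) * (1 - q) ^ ((M - R) - (i - R))) :=
        Finset.sum_le_sum key
    _ = (M.choose R : ℝ) * q ^ R * ∑ i ∈ Finset.Icc R M,
          (((M - R).choose (i - R) : ℝ) * q ^ (i - R) * (1 - q) ^ ((M - R) - (i - R))) := by
        rw [Finset.mul_sum]
    _ = (M.choose R : ℝ) * q ^ R * 1 := by
        congr 1
        have hlen : M + 1 - R = M - R + 1 := by omega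
        rw [← Finset.Ico_add_one_right_eq_Icc, Finset.sum_Ico_eq_sum_range, hlen]
        refine Eq.trans (Finset.sum_congr rfl ?_) hsum
        intro j _
        simp [Nat.add_sub_cancel_left]
    _ = (M.choose R : ℝ) * q ^ R := by ring

lemma log_factorial_ge (R : ℕ) : (R:ℝ) * Real.log R - R ≤ Real.log (R.factorial) := by
  rcases Nat.eq_zero_or_pos R with h | h
  · simp [h]
  have hRpos : (0:ℝ) < R := by exact_mod_cast h
  have hfac : (0:ℝ) < (R.factorial : ℝ) := by exact_mod_cast R.factorial_pos
  have key : ((R:ℝ)) ^ R ≤ Real.exp R * R.factorial := by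
    have hsum := Real.sum_le_exp_of_nonneg hRpos.le (R + 1)
    have hterm : (R:ℝ) ^ R / R.factorial ≤ ∑ i ∈ Finset.range (R + 1), (R:ℝ) ^ i / i.factorial := by
      exact Finset.single_le_sum (f := fun i => (R:ℝ) ^ i / (i.factorial : ℝ))
        (fun i _ => by positivity) (Finset.self_mem_range_succ R)
    have := hterm.trans hsum
    rw [div_le_iff₀ hfac] at this
    linarith [this]
  have := Real.log_le_log (by positivity) key
  rw [Real.log_pow, Real.log_mul (Real.exp_ne_zero _) hfac.ne', Real.log_exp] at this
  linarith


set_option maxHeartbeats 1000000 in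
/-- under the stated conditions,
`log P(Bin(⌊m_n⌋, q_n) ≥ r_n) = r_n log(m_n q_n / r_n)(1 + o(1))`,
i.e. the ratio of the two sides tends to `1`. -/
theorem stmt_9 (q m : ℕ → ℝ) (r : ℕ → ℕ)
    (hq : ∀ n, q n ∈ Set.Ioo (0 : ℝ) 1) (hm : ∀ n, 1 ≤ m n)
    (hq0 : Tendsto q atTop (nhds 0))
    (hr : Tendsto (fun n => (r n : ℝ)) atTop atTop)
    (hrqm : Tendsto (fun n => (r n : ℝ) / (q n * m n)) atTop atTop)
    (hrm : Tendsto (fun n => (r n : ℝ) / m n) atTop (nhds 0))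
    (hlim : ∃ L : EReal, Tendsto (fun n => ((q n * m n : ℝ) : EReal)) atTop (nhds L)) :
    Tendsto (fun n =>
        Real.log (binomTail ⌊m n⌋₊ (q n) (r n)) /
          ((r n : ℝ) * Real.log (m n * q n / (r n : ℝ))))
      atTop (nhds 1) := by
  clear hlim
  have hmpos : ∀ n, (0:ℝ) < m n := fun n => lt_of_lt_of_le one_pos (hm n)
  -- x n := m n * q n / r n tends to 0
  have hsmall : Tendsto (fun n => m n * q n / (r n : ℝ)) atTop (nhds 0) := by
    have h := hrqm.inv_tendsto_atTop
    have heq : (fun n => ((r n : ℝ) / (q n * m n)))⁻¹ = fun n => m n * q n / (r n : ℝ) := by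
      funext n; simp [Pi.inv_apply, inv_div]; ring
    rwa [heq] at h
  -- -log x → ∞
  have hlogtop : Tendsto (fun n => -Real.log (m n * q n / (r n : ℝ))) atTop atTop := by
    have hpos : ∀ᶠ n in atTop, m n * q n / (r n : ℝ) ∈ Set.Ioi (0:ℝ) := by
      filter_upwards [hr.eventually_ge_atTop 1] with n hn
      have hrp : (0:ℝ) < (r n : ℝ) := lt_of_lt_of_le one_pos hn
      exact div_pos (mul_pos (hmpos n) (hq n).1) hrp
    have h1 : Tendsto (fun n => m n * q n / (r n : ℝ)) atTop (nhdsWithin 0 (Set.Ioi 0)) :=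
      tendsto_nhdsWithin_of_tendsto_nhds_of_eventually_within _ hsmall hpos
    exact tendsto_neg_atBot_atTop.comp (Real.tendsto_log_nhdsGT_zero.comp h1)
  -- the error bound g → 0
  set g : ℕ → ℝ := fun n =>
    ((1 + Real.log 4) + 2 * (m n * q n / (r n : ℝ))) / (-Real.log (m n * q n / (r n : ℝ))) with hg_def
  have hg : Tendsto g atTop (nhds 0) := by
    have hnum : Tendsto (fun n => (1 + Real.log 4) + 2 * (m n * q n / (r n : ℝ))) atTop
        (nhds ((1 + Real.log 4) + 2 * 0)) :=
      tendsto_const_nhds.add (hsmall.const_mul 2)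
    exact hnum.div_atTop hlogtop
  -- main eventual bound
  have hbound : ∀ᶠ n in atTop,
      |Real.log (binomTail ⌊m n⌋₊ (q n) (r n)) /
          ((r n : ℝ) * Real.log (m n * q n / (r n : ℝ))) - 1| ≤ g n := by
    filter_upwards [(tendsto_order.1 hsmall).2 (1/2) (by norm_num),
      (tendsto_order.1 hrm).2 (1/4) (by norm_num),
      (tendsto_order.1 hq0).2 (1/2) (by norm_num),
      hr.eventually_ge_atTop 1] with n h1 h2 h3 h4
    set Q := q n with hQdef
    set R := r n with hRdef
    set M := ⌊m n⌋₊ with hMdef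
    have hQ0 : 0 < Q := (hq n).1
    have hQ1 : Q < 1 := (hq n).2
    have hm1 : 1 ≤ m n := hm n
    have hmp : (0:ℝ) < m n := hmpos n
    have hRp : (0:ℝ) < (R:ℝ) := lt_of_lt_of_le one_pos h4
    have hRne : (R:ℝ) ≠ 0 := hRp.ne'
    have hrm' : (R:ℝ) < m n / 4 := by
      have := (div_lt_iff₀ hmp).1 h2
      linarith
    have hM_le : (M:ℝ) ≤ m n := Nat.floor_le (le_of_lt hmp)
    have hM_ge : m n / 2 ≤ (M:ℝ) := by
      rcases le_or_gt 2 (m n) with h | h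
      · have := Nat.sub_one_lt_floor (m n)
        linarith
      · have h1' : (1:ℕ) ≤ M := Nat.le_floor (by exact_mod_cast hm1)
        have : (1:ℝ) ≤ (M:ℝ) := by exact_mod_cast h1'
        linarith
    have hRM : R ≤ M := Nat.le_floor (by linarith)
    have hRMr : (R:ℝ) ≤ (M:ℝ) := by exact_mod_cast hRM
    have hMp : (0:ℝ) < (M:ℝ) := by linarith
    set x := m n * q n / (R:ℝ) with hxdef
    have hx0 : 0 < x := div_pos (mul_pos hmp hQ0) hRp
    have hx1 : x < 1 := by rw [hxdef]; linarith [h1]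
    have hLg : Real.log x < 0 := Real.log_neg hx0 hx1
    have hlogx : Real.log x = Real.log (m n) + Real.log Q - Real.log (R:ℝ) := by
      rw [hxdef, Real.log_div (mul_pos hmp hQ0).ne' hRne, Real.log_mul hmp.ne' hQ0.ne']
    have h1Q : (0:ℝ) < 1 - Q := by linarith
    -- positivity of the tail
    have hPp : 0 < binomialP M Q R := by
      unfold binomialP
      have hc : 0 < (M.choose R : ℝ) := by exact_mod_cast Nat.choose_pos hRM
      positivity
    have hTp : 0 < binomTail M Q R := lt_of_lt_of_le hPp (binomTail_lower hQ0.le hQ1.le hRM)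
    set A := Real.log (binomTail M Q R) with hAdef
    -- upper bound on A
    have hA_ub : A ≤ (R:ℝ) * Real.log x + R := by
      have h5 : binomTail M Q R ≤ (M.choose R : ℝ) * Q ^ R := binomTail_upper hQ0.le hQ1.le hRM
      have h6 : (M.choose R : ℝ) ≤ (M:ℝ) ^ R / (R.factorial : ℝ) := by
        have := Nat.choose_le_pow_div (α := ℝ) R M
        exact_mod_cast this
      have hfacp : (0:ℝ) < (R.factorial : ℝ) := by exact_mod_cast R.factorial_pos
      have h7 : binomTail M Q R ≤ ((M:ℝ) ^ R / (R.factorial : ℝ)) * Q ^ R :=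
        h5.trans (mul_le_mul_of_nonneg_right h6 (by positivity))
      have h8 : A ≤ Real.log (((M:ℝ) ^ R / (R.factorial : ℝ)) * Q ^ R) := Real.log_le_log hTp h7
      rw [Real.log_mul (by positivity) (by positivity), Real.log_div (by positivity) hfacp.ne',
        Real.log_pow, Real.log_pow] at h8
      have h9 : (R:ℝ) * Real.log (R:ℝ) - R ≤ Real.log (R.factorial : ℝ) := log_factorial_ge R
      have h10 : (R:ℝ) * Real.log (M:ℝ) ≤ (R:ℝ) * Real.log (m n) :=
        mul_le_mul_of_nonneg_left (Real.log_le_log hMp hM_le) hRp.le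
      rw [hlogx]
      linarith
    -- lower bound on A
    have hA_lb : (R:ℝ) * Real.log x - (R:ℝ) * Real.log 4 - 2 * (m n * Q) ≤ A := by
      have hfacp : (0:ℝ) < (R.factorial : ℝ) := by exact_mod_cast R.factorial_pos
      have hc : (m n / (4 * (R:ℝ))) ^ R ≤ (M.choose R : ℝ) := by
        have h7 : ((M + 1 - R : ℕ) ^ R : ℝ) / (R.factorial : ℝ) ≤ (M.choose R : ℝ) := by
          have := Nat.pow_le_choose (α := ℝ) R M
          exact_mod_cast this
        have hcast : ((M + 1 - R : ℕ) : ℝ) = (M:ℝ) + 1 - R := by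
          have hle : R ≤ M + 1 := by omega
          push_cast [hle]
          ring
        have hb : m n / 4 ≤ ((M + 1 - R : ℕ) : ℝ) := by rw [hcast]; linarith
        have hfl : (R.factorial : ℝ) ≤ (R:ℝ) ^ R := by exact_mod_cast Nat.factorial_le_pow R
        have hb0 : (0:ℝ) < m n / 4 := by linarith
        calc (m n / (4 * (R:ℝ))) ^ R = (m n / 4) ^ R / (R:ℝ) ^ R := by
              rw [div_pow, div_pow, mul_pow, div_div]
          _ ≤ ((M + 1 - R : ℕ) : ℝ) ^ R / (R:ℝ) ^ R := by
              apply div_le_div_of_nonneg_right _ (by positivity)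
              exact pow_le_pow_left₀ hb0.le hb R
          _ ≤ ((M + 1 - R : ℕ) : ℝ) ^ R / (R.factorial : ℝ) := by
              apply div_le_div_of_nonneg_left (by positivity) hfacp hfl
          _ ≤ (M.choose R : ℝ) := by exact_mod_cast h7
      have hlog1q : -(2 * Q) ≤ Real.log (1 - Q) := by
        rw [Real.le_log_iff_exp_le h1Q]
        have e1 : 1 + 2 * Q ≤ Real.exp (2 * Q) := by
          have := Real.add_one_le_exp (2 * Q); linarith
        have e2 : Real.exp (-(2 * Q)) * Real.exp (2 * Q) = 1 := by
          rw [← Real.exp_add]; norm_num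
        nlinarith [Real.exp_pos (-(2 * Q)), Real.exp_pos (2 * Q), sq_nonneg Q]
      have hlow : (m n / (4 * (R:ℝ))) ^ R * Q ^ R * (1 - Q) ^ (M - R) ≤ binomTail M Q R := by
        refine le_trans ?_ (binomTail_lower hQ0.le hQ1.le hRM)
        unfold binomialP
        apply mul_le_mul_of_nonneg_right _ (by positivity)
        exact mul_le_mul_of_nonneg_right hc (by positivity)
      have hbase : (0:ℝ) < m n / (4 * (R:ℝ)) := by positivity
      have h8 : Real.log ((m n / (4 * (R:ℝ))) ^ R * Q ^ R * (1 - Q) ^ (M - R)) ≤ A :=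
        Real.log_le_log (by positivity) hlow
      rw [Real.log_mul (by positivity) (by positivity), Real.log_mul (by positivity) (by positivity),
        Real.log_pow, Real.log_pow, Real.log_pow,
        Real.log_div hmp.ne' (by positivity),
        Real.log_mul (by norm_num) hRne] at h8
      -- h8 : R*(log m - (log 4 + log R)) + R*log Q + (M-R)*log(1-Q) ≤ A
      have h9 : ((M - R : ℕ) : ℝ) * Real.log (1 - Q) ≥ -(2 * (m n * Q)) := by
        have hc1 : ((M - R : ℕ) : ℝ) ≤ m n := by
          have : ((M - R : ℕ) : ℝ) ≤ (M : ℝ) := by exact_mod_cast Nat.sub_le M R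
          linarith
        have hc0 : (0:ℝ) ≤ ((M - R : ℕ) : ℝ) := Nat.cast_nonneg _
        have p1 : 0 ≤ ((M - R : ℕ) : ℝ) * (Real.log (1 - Q) + 2 * Q) :=
          mul_nonneg hc0 (by linarith)
        have p2 : 0 ≤ Q * (m n - ((M - R : ℕ) : ℝ)) := mul_nonneg hQ0.le (by linarith)
        nlinarith [p1, p2]
      rw [hlogx]
      linarith
    -- combine
    set L := (R:ℝ) * Real.log x with hLdef
    have hLneg : L < 0 := mul_neg_of_pos_of_neg hRp hLg
    have hlog4 : (0:ℝ) < Real.log 4 := Real.log_pos (by norm_num)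
    have hmq0 : (0:ℝ) < m n * Q := mul_pos hmp hQ0
    have habs1 : |A - L| ≤ (R:ℝ) * (1 + Real.log 4) + 2 * (m n * Q) := by
      rw [abs_le]
      constructor
      · nlinarith
      · nlinarith
    have hnl : (0:ℝ) < -Real.log x := by linarith
    have heq1 : A / L - 1 = (A - L) / L := by rw [sub_div, div_self hLneg.ne]
    rw [heq1, abs_div, abs_of_neg hLneg]
    have hneg : -L = (R:ℝ) * (-Real.log x) := by rw [hLdef]; ring
    rw [hneg, hg_def]
    have h10 : |A - L| ≤ ((1 + Real.log 4) + 2 * (m n * q n / (R:ℝ))) * (R:ℝ) := by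
      have : ((1 + Real.log 4) + 2 * (m n * q n / (R:ℝ))) * (R:ℝ)
          = (R:ℝ) * (1 + Real.log 4) + 2 * (m n * Q) := by
        field_simp
        ring
      rw [this]
      exact habs1
    rw [div_le_div_iff₀ (mul_pos hRp hnl) hnl]
    calc |A - L| * (-Real.log x)
        ≤ (((1 + Real.log 4) + 2 * (m n * q n / (R:ℝ))) * (R:ℝ)) * (-Real.log x) :=
          mul_le_mul_of_nonneg_right h10 hnl.le
      _ = ((1 + Real.log 4) + 2 * (m n * q n / (R:ℝ))) * ((R:ℝ) * (-Real.log x)) := by ring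
  -- conclude
  have hzero : Tendsto (fun n =>
      Real.log (binomTail ⌊m n⌋₊ (q n) (r n)) /
        ((r n : ℝ) * Real.log (m n * q n / (r n : ℝ))) - 1) atTop (nhds 0) := by
    apply squeeze_zero_norm' _ (by simpa using hg)
    simpa [Real.norm_eq_abs] using hbound
  have := hzero.add (tendsto_const_nhds : Tendsto (fun _ : ℕ => (1:ℝ)) atTop (nhds 1))
  simpa using this
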